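/- For every complex number μ and the Volterra operator V on L²[0,1], the operator norm satisfies ‖V + μI‖ ≥ |μ|, with equality never attained: in fact ‖V + μI‖ > |μ| for all μ ∈ ℂ. -/

import Mathlib

open MeasureTheory

noncomputable def m : Measure ℝ := volume.restrict (Set.Icc 0 1)

lemma m_def : m = volume.restrict (Set.Icc 0 1) := rfl

instance : IsFiniteMeasure m := by
  rw [m_def]
  exact ⟨by simp⟩

lemma m_ae_mem : ∀ᵐ x ∂m, x ∈ Set.Icc (0:ℝ) 1 := by
  rw [m_def]; exact ae_restrict_mem measurableSet_Icc

lemma rclike_coe (r : ℝ) : (RCLike.ofReal r : ℂ) = Complex.ofReal r := rfl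

lemma poly_int (c0 c1 c2 c3 c4 : ℝ) :
    ∫ x in (0:ℝ)..1, (c0 + c1*x + c2*x^2 + c3*x^3 + c4*x^4) =
      c0 + c1/2 + c2/3 + c3/4 + c4/5 := by
  have key : ∀ x ∈ Set.uIcc (0:ℝ) 1,
      HasDerivAt (fun y : ℝ => c0*y + c1/2*y^2 + c2/3*y^3 + c3/4*y^4 + c4/5*y^5)
        (c0 + c1*x + c2*x^2 + c3*x^3 + c4*x^4) x := by
    intro x _
    have h := ((((((hasDerivAt_pow 1 x).const_mul c0).add
      ((hasDerivAt_pow 2 x).const_mul (c1/2))).add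
      ((hasDerivAt_pow 3 x).const_mul (c2/3))).add
      ((hasDerivAt_pow 4 x).const_mul (c3/4))).add
      ((hasDerivAt_pow 5 x).const_mul (c4/5)))
    refine HasDerivAt.congr_deriv (h.congr_of_eventuallyEq (Filter.Eventually.of_forall fun y => ?_)) ?_
    · simp only [Pi.add_apply]; ring
    · norm_num; ring
  have hc : ContinuousOn (fun x : ℝ => c0 + c1*x + c2*x^2 + c3*x^3 + c4*x^4) (Set.uIcc 0 1) := by
    fun_prop
  rw [intervalIntegral.integral_eq_sub_of_hasDerivAt key (hc.intervalIntegrable)]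
  norm_num

/-- The L² norm squared of an Lp element with explicit a.e. representative. -/
lemma norm_sq_eq (f : Lp ℂ 2 m) (h : ℝ → ℂ) (hf : ⇑f =ᵐ[m] h) :
    ‖f‖^2 = ∫ x in (0:ℝ)..1, Complex.normSq (h x) := by
  rw [← inner_self_eq_norm_sq (𝕜 := ℂ) f, L2.inner_def]
  have : ∫ a, (inner ℂ (f a) (f a) : ℂ) ∂m
      = ∫ a, (RCLike.ofReal (Complex.normSq (h a)) : ℂ) ∂m := by
    refine integral_congr_ae ?_
    filter_upwards [hf] with a ha
    rw [ha, RCLike.inner_apply, rclike_coe, mul_comm, ← Complex.normSq_eq_conj_mul_self]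
  rw [this, integral_ofReal, RCLike.ofReal_re, m_def,
    MeasureTheory.integral_Icc_eq_integral_Ioc,
    ← intervalIntegral.integral_of_le (zero_le_one)]

theorem norm_volterra_add_smul_id_gt (V : Lp ℂ 2 m →L[ℂ] Lp ℂ 2 m)
    (hV : ∀ f : Lp ℂ 2 m, V f =ᵐ[m] fun x => ∫ t in Set.Ioc 0 x, f t ∂m) :
    ∀ μ : ℂ, ‖μ‖ < ‖V + μ • (1 : Lp ℂ 2 m →L[ℂ] Lp ℂ 2 m)‖ := by
  intro μ
  set b : ℝ → ℂ := fun x => 1 - 2*x with hb_def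
  have hb_cont : Continuous b := by fun_prop
  have hb : MemLp b 2 m := by
    refine MemLp.of_bound hb_cont.aestronglyMeasurable 3 ?_
    filter_upwards [m_ae_mem] with x hx
    have hx1 : |x| ≤ 1 := abs_le.mpr ⟨le_trans (by norm_num) hx.1, hx.2⟩
    calc ‖b x‖ ≤ ‖(1:ℂ)‖ + ‖(2:ℂ)*x‖ := norm_sub_le _ _
    _ = 1 + 2*|x| := by
        rw [norm_one, norm_mul]
        simp [Complex.norm_ofNat, Complex.norm_real, Real.norm_eq_abs]
    _ ≤ 3 := by linarith
  set g : Lp ℂ 2 m := hb.toLp b with hg_def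
  have hgb : ⇑g =ᵐ[m] b := hb.coeFn_toLp
  set T := V + μ • (1 : Lp ℂ 2 m →L[ℂ] Lp ℂ 2 m) with hT_def
  -- a.e. representative of T g
  have hVg : V g =ᵐ[m] fun x => (x:ℂ) - (x:ℂ)^2 := by
    refine (hV g).trans ?_
    have heq : ∀ x : ℝ, (∫ t in Set.Ioc (0:ℝ) x, g t ∂m) = ∫ t in Set.Ioc (0:ℝ) x, b t ∂m :=
      fun x => integral_congr_ae (ae_restrict_of_ae hgb)
    filter_upwards [m_ae_mem] with x hx
    rw [heq x, m_def, Measure.restrict_restrict measurableSet_Ioc,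
      Set.inter_eq_left.mpr (Set.Ioc_subset_Icc_self.trans (Set.Icc_subset_Icc le_rfl hx.2))]
    rw [← intervalIntegral.integral_of_le hx.1]
    have hbr : ∀ t : ℝ, b t = ((1 - 2*t : ℝ) : ℂ) := by intro t; simp [hb_def]
    simp_rw [hbr, intervalIntegral.integral_ofReal]
    have key : ∀ t ∈ Set.uIcc (0:ℝ) x,
        HasDerivAt (fun y : ℝ => y - y^2) (1 - 2*t) t := by
      intro t _
      exact ((hasDerivAt_id t).sub (hasDerivAt_pow 2 t)).congr_deriv (by norm_num)
    rw [intervalIntegral.integral_eq_sub_of_hasDerivAt key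
      (by apply ContinuousOn.intervalIntegrable; fun_prop)]
    push_cast
    ring
  have hTg : ⇑(T g) =ᵐ[m] fun x => ((x:ℂ) - (x:ℂ)^2) + μ * (1 - 2*x) := by
    have h1 : T g = V g + μ • g := by
      simp [hT_def, ContinuousLinearMap.add_apply]
    rw [h1]
    filter_upwards [Lp.coeFn_add (V g) (μ • g), Lp.coeFn_smul μ g, hVg, hgb] with x h2 h3 h4 h5
    simp only [h2, Pi.add_apply, h3, Pi.smul_apply, smul_eq_mul, h4, h5, hb_def]
  -- norm computations
  have hgnorm : ‖g‖^2 = 1/3 := by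
    rw [norm_sq_eq g b hgb]
    have e : ∀ x : ℝ, Complex.normSq (b x) = 1 + (-4)*x + 4*x^2 + 0*x^3 + 0*x^4 := by
      intro x
      simp [hb_def, Complex.normSq_apply]
      ring
    simp_rw [e]
    rw [poly_int]
    norm_num
  have hTgnorm : ‖T g‖^2 = 1/30 + Complex.normSq μ * (1/3) := by
    rw [norm_sq_eq (T g) _ hTg]
    have e : ∀ x : ℝ, Complex.normSq (((x:ℂ) - (x:ℂ)^2) + μ * (1 - 2*x)) =
        (μ.re^2 + μ.im^2) + (2*μ.re - 4*(μ.re^2+μ.im^2))*x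
          + (1 - 6*μ.re + 4*(μ.re^2+μ.im^2))*x^2 + (4*μ.re - 2)*x^3 + 1*x^4 := by
      intro x
      simp only [Complex.normSq_apply, Complex.add_re, Complex.add_im, Complex.sub_re,
        Complex.sub_im, Complex.mul_re, Complex.mul_im, Complex.one_re, Complex.one_im,
        Complex.ofReal_re, Complex.ofReal_im, ← Complex.ofReal_pow, Complex.mul_im,
        Complex.re_ofNat, Complex.im_ofNat]
      ring
    simp_rw [e]
    rw [poly_int, Complex.normSq_apply]
    ring
  -- conclude
  have hle : ‖T g‖ ≤ ‖T‖ * ‖g‖ := T.le_opNorm g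
  have h2 : ‖μ‖ ^ 2 = Complex.normSq μ := Complex.sq_norm μ
  have hsq : ‖μ‖ ^ 2 < ‖T‖ ^ 2 := by
    nlinarith [mul_self_le_mul_self (norm_nonneg (T g)) hle, norm_nonneg (T g),
      norm_nonneg g, norm_nonneg T]
  exact lt_of_pow_lt_pow_left₀ 2 (norm_nonneg T) hsq
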